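/- Let P and P_ε be Markov kernels on X with π stationary for P, P acting on L²(π) through T_P and L²(π)-geometrically ergodic with rate 1−α, P_ε acting on L²(π) through T_ε, ‖T_P − T_ε‖ ≤ ε, and 0 < ε < α. Suppose P_ε has a stationary probability measure π_ε with π_ε ≪ π and dπ_ε/dπ ∈ L²(π). Then 1 ≤ ‖π_ε‖₂ ≤ α/√(α² − ε²) and 0 ≤ ‖π − π_ε‖₂ ≤ ε/√(α² − ε²). -/

import Mathlib

open MeasureTheory ProbabilityTheory Filter ENNReal

variable {X : Type*} [MeasurableSpace X]

/-- The real-valued Radon–Nikodym density of `μ` with respect to `π`. -/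
noncomputable def rnd (π μ : Measure X) (x : X) : ℝ := (μ.rnDeriv π x).toReal

/-- `n`-fold action of the kernel `P` on the measure `μ`, i.e. `μPⁿ`. -/
noncomputable def mIter (P : Kernel X X) (n : ℕ) (μ : Measure X) : Measure X :=
  (fun ν => ν.bind (fun x => P x))^[n] μ

/-- `n`-fold composition of the kernel `P`, i.e. `Pⁿ`. -/
noncomputable def kpow (P : Kernel X X) : ℕ → Kernel X X
  | 0 => Kernel.id
  | n + 1 => (kpow P n).comp P

/-- `‖μ − ν‖₂`, the `L²(π)` distance between the `π`-densities of `μ` and `ν`. -/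
noncomputable def d2 (π μ ν : Measure X) : ℝ :=
  (eLpNorm (fun x => rnd π μ x - rnd π ν x) 2 π).toReal

/-- `‖μ − ν‖₁`, the `L¹(π)` distance between the `π`-densities of `μ` and `ν`. -/
noncomputable def d1 (π μ ν : Measure X) : ℝ := ∫ x, |rnd π μ x - rnd π ν x| ∂π

/-- `P` acts on `L²(π)` through the bounded linear operator `T`:
for every probability measure `μ ≪ π` with `dμ/dπ ∈ L²(π)`,
`T(dμ/dπ)` is a version of `d(μP)/dπ`. -/
def ActsOn (π : Measure X) (P : Kernel X X) (T : Lp ℝ 2 π →L[ℝ] Lp ℝ 2 π) : Prop :=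
  ∀ μ : Measure X, IsProbabilityMeasure μ → μ ≪ π →
    ∀ h : MemLp (rnd π μ) 2 π,
      ⇑(T (h.toLp (rnd π μ))) =ᵐ[π] rnd π (μ.bind (fun x => P x))

/-- `L²(π)`-geometric ergodicity with rate `1 − α`:
`T` contracts mean-zero functions by the factor `1 − α`. -/
def IsGeomErg (π : Measure X) (T : Lp ℝ 2 π →L[ℝ] Lp ℝ 2 π) (α : ℝ) : Prop :=
  ∀ f : Lp ℝ 2 π, ∫ x, f x ∂π = 0 → ‖T f‖ ≤ (1 - α) * ‖f‖

/-- Reversibility of `P` with respect to `π`. -/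
def Reversible (π : Measure X) (P : Kernel X X) : Prop :=
  ∀ A B : Set X, MeasurableSet A → MeasurableSet B →
    ∫⁻ x in A, P x B ∂π = ∫⁻ x in B, P x A ∂π

/-- `∫ h dPᵏ(x,·)`, the `k`-step forward operator applied to `h`. -/
noncomputable def kInt (P : Kernel X X) (k : ℕ) (h : X → ℝ) (x : X) : ℝ :=
  ∫ y, h y ∂(kpow P k x)

/-- `μPᵏh = ∫∫ h(y) Pᵏ(x,dy) μ(dx)`. -/
noncomputable def mkInt (P : Kernel X X) (μ : Measure X) (k : ℕ) (h : X → ℝ) : ℝ :=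
  ∫ x, kInt P k h x ∂μ

/-- Path covariance `Cov_μ(f(X_t), g(X_{t+s}))` of the chain with kernel `P` started at `μ`. -/
noncomputable def covPath (P : Kernel X X) (μ : Measure X) (t s : ℕ) (f g : X → ℝ) : ℝ :=
  ∫ x, (∫ y, (∫ z, (f y - mkInt P μ t f) * (g z - mkInt P μ (t + s) g)
    ∂(kpow P s y)) ∂(kpow P t x)) ∂μ

/-- Path covariance `Cov_μ(f(X_m), g(X_n))` of the chain with kernel `P` started at `μ`. -/
noncomputable def covPath2 (P : Kernel X X) (μ : Measure X) (m n : ℕ) (f g : X → ℝ) : ℝ :=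
  ∫ x, (∫ y, (∫ z, (f y - mkInt P μ (min m n) f) * (g z - mkInt P μ (max m n) g)
    ∂(kpow P (max m n - min m n) y)) ∂(kpow P (min m n) x)) ∂μ

set_option maxHeartbeats 1000000 in
/-- If `ε < α` and `dπ_ε/dπ ∈ L²(π)`, then `1 ≤ ‖π_ε‖₂ ≤ α/√(α²−ε²)` and
`0 ≤ ‖π − π_ε‖₂ ≤ ε/√(α²−ε²)`. -/
theorem stmt4 (π : Measure X) [IsProbabilityMeasure π] (P Pe : Kernel X X)
    [IsMarkovKernel P] [IsMarkovKernel Pe]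
    (hstat : π.bind (fun x => P x) = π)
    (α ε : ℝ) (hα0 : 0 < α) (hα1 : α < 1) (hε0 : 0 < ε) (hεα : ε < α)
    (T Te : Lp ℝ 2 π →L[ℝ] Lp ℝ 2 π) (hT : ActsOn π P T) (hTe : ActsOn π Pe Te)
    (hge : IsGeomErg π T α) (hdiff : ‖T - Te‖ ≤ ε)
    (πe : Measure X) [IsProbabilityMeasure πe] (hstate : πe.bind (fun x => Pe x) = πe)
    (hac1 : πe ≪ π) (hπe : MemLp (rnd π πe) 2 π) :
    (1 ≤ (eLpNorm (rnd π πe) 2 π).toReal ∧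
      (eLpNorm (rnd π πe) 2 π).toReal ≤ α / Real.sqrt (α ^ 2 - ε ^ 2)) ∧
    (0 ≤ d2 π π πe ∧ d2 π π πe ≤ ε / Real.sqrt (α ^ 2 - ε ^ 2)) := by
  classical
  -- The density of π w.r.t. itself is a.e. 1
  have hππ : rnd π π =ᵐ[π] fun _ => (1 : ℝ) := by
    filter_upwards [Measure.rnDeriv_self π] with x hx
    simp [rnd, hx]
  have hπmem : MemLp (rnd π π) 2 π := (memLp_const (1 : ℝ)).ae_eq hππ.symm
  set F : Lp ℝ 2 π := hπe.toLp (rnd π πe) with hFdef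
  set one : Lp ℝ 2 π := hπmem.toLp (rnd π π) with honedef
  have hone_ae : ⇑one =ᵐ[π] fun _ => (1 : ℝ) := (MemLp.coeFn_toLp _).trans hππ
  have hF_ae : ⇑F =ᵐ[π] rnd π πe := MemLp.coeFn_toLp _
  -- T fixes the constant 1
  have hTone : T one = one := by
    apply Lp.ext
    have h1 := hT π inferInstance Measure.AbsolutelyContinuous.rfl hπmem
    rw [hstat] at h1
    exact h1.trans ((MemLp.coeFn_toLp hπmem).symm)
  -- Te fixes F
  have hTeF : Te F = F := by
    apply Lp.ext
    have h1 := hTe πe inferInstance hac1 hπe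
    rw [hstate] at h1
    exact h1.trans hF_ae.symm
  -- integrals
  have hintF : ∫ x, F x ∂π = 1 := by
    rw [integral_congr_ae hF_ae]
    have := Measure.integral_toReal_rnDeriv hac1
    simpa [rnd] using this
  have hintone : ∫ x, one x ∂π = 1 := by
    rw [integral_congr_ae hone_ae]; simp
  set g : Lp ℝ 2 π := F - one with hgdef
  have hFg : F = one + g := by rw [hgdef]; abel
  have hintg : ∫ x, g x ∂π = 0 := by
    have hcoe : ⇑g =ᵐ[π] ⇑F - ⇑one := Lp.coeFn_sub F one
    rw [integral_congr_ae hcoe]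
    simp only [Pi.sub_apply]
    rw [integral_sub (MemLp.integrable (by norm_num) (Lp.memLp F))
      (MemLp.integrable (by norm_num) (Lp.memLp one))]
    rw [hintF, hintone]; ring
  -- contraction
  have hcontr : ‖T g‖ ≤ (1 - α) * ‖g‖ := hge g hintg
  -- perturbation
  have hpert : ‖g - T g‖ ≤ ε * ‖F‖ := by
    have h1 : g - T g = (Te - T) F := by
      rw [ContinuousLinearMap.sub_apply, hTeF, hFg, map_add, hTone]
      abel
    rw [h1]
    calc ‖(Te - T) F‖ ≤ ‖Te - T‖ * ‖F‖ := (Te - T).le_opNorm F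
      _ ≤ ε * ‖F‖ := by
          rw [norm_sub_rev]
          exact mul_le_mul_of_nonneg_right hdiff (norm_nonneg F)
  have hkey : α * ‖g‖ ≤ ε * ‖F‖ := by
    have : ‖g‖ ≤ ‖g - T g‖ + ‖T g‖ := by
      calc ‖g‖ = ‖(g - T g) + T g‖ := by rw [sub_add_cancel]
        _ ≤ ‖g - T g‖ + ‖T g‖ := norm_add_le _ _
    nlinarith [norm_nonneg g]
  -- inner ℝ product facts
  have hinner_one_g : (inner ℝ one g : ℝ) = 0 := by
    rw [MeasureTheory.L2.inner_def]
    have : (fun x => (inner ℝ (one x) (g x) : ℝ)) =ᵐ[π] fun x => g x := by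
      filter_upwards [hone_ae] with x hx
      simp [RCLike.inner_apply, hx]
    rw [integral_congr_ae this, hintg]
  have hnorm_one : ‖one‖ = 1 := by
    have h1 : (inner ℝ one one : ℝ) = 1 := by
      rw [MeasureTheory.L2.inner_def]
      have : (fun x => (inner ℝ (one x) (one x) : ℝ)) =ᵐ[π] fun _ => (1 : ℝ) := by
        filter_upwards [hone_ae] with x hx
        simp [RCLike.inner_apply, hx]
      rw [integral_congr_ae this]; simp
    have h2 : ‖one‖ ^ 2 = 1 := by
      rw [← real_inner_self_eq_norm_sq, h1]
    nlinarith [norm_nonneg one]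
  have hpyth : ‖F‖ ^ 2 = 1 + ‖g‖ ^ 2 := by
    rw [hFg]
    have hgo : (inner ℝ g one : ℝ) = 0 := by rw [real_inner_comm]; exact hinner_one_g
    rw [← real_inner_self_eq_norm_sq, inner_add_add_self, hinner_one_g, hgo,
      real_inner_self_eq_norm_sq, real_inner_self_eq_norm_sq, hnorm_one]
    ring
  -- lower bound ‖F‖ ≥ 1
  have hFge1 : 1 ≤ ‖F‖ := by
    have h1 : (inner ℝ F one : ℝ) = 1 := by
      rw [MeasureTheory.L2.inner_def]
      have : (fun x => (inner ℝ (F x) (one x) : ℝ)) =ᵐ[π] fun x => F x := by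
        filter_upwards [hone_ae] with x hx
        simp [RCLike.inner_apply, hx]
      rw [integral_congr_ae this, hintF]
    calc (1 : ℝ) = inner ℝ F one := h1.symm
      _ ≤ ‖F‖ * ‖one‖ := real_inner_le_norm F one
      _ = ‖F‖ := by rw [hnorm_one, mul_one]
  -- identification of the goal quantities
  have hFnorm : (eLpNorm (rnd π πe) 2 π).toReal = ‖F‖ := (Lp.norm_toLp _ hπe).symm
  have hd2 : d2 π π πe = ‖g‖ := by
    have hcoe : ⇑g =ᵐ[π] ⇑F - ⇑one := Lp.coeFn_sub F one
    have hae : (fun x => rnd π π x - rnd π πe x) =ᵐ[π] fun x => -(g x) := by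
      filter_upwards [hcoe, hF_ae, hone_ae, hππ] with x h1 h2 h3 h4
      have : g x = F x - one x := h1
      rw [this, h2, h3, h4]
      ring
    rw [d2, eLpNorm_congr_ae hae]
    have : eLpNorm (fun x => -(g x)) 2 π = eLpNorm (⇑g) 2 π := by
      exact eLpNorm_neg (f := ⇑g) (p := (2 : ℝ≥0∞)) (μ := π)
    rw [this, ← Lp.norm_def]
  -- algebra
  have hs2 : (0 : ℝ) < α ^ 2 - ε ^ 2 := by nlinarith
  set s : ℝ := Real.sqrt (α ^ 2 - ε ^ 2) with hsdef
  have hs0 : 0 < s := Real.sqrt_pos.mpr hs2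
  have hss : s ^ 2 = α ^ 2 - ε ^ 2 := Real.sq_sqrt hs2.le
  have hkey2 : α ^ 2 * ‖g‖ ^ 2 ≤ ε ^ 2 * ‖F‖ ^ 2 := by
    have h := mul_le_mul hkey hkey (mul_nonneg hα0.le (norm_nonneg g))
      (mul_nonneg hε0.le (norm_nonneg F))
    nlinarith [h]
  have hgle : ‖g‖ ≤ ε / s := by
    rw [le_div_iff₀ hs0]
    have h2 : (‖g‖ * s) ^ 2 ≤ ε ^ 2 := by
      have he : (‖g‖ * s) ^ 2 = ‖g‖ ^ 2 * s ^ 2 := by ring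
      rw [he, hss]
      nlinarith [hkey2, hpyth]
    have h4 := Real.sqrt_le_sqrt h2
    rwa [Real.sqrt_sq (by positivity), Real.sqrt_sq hε0.le] at h4
  have hFle : ‖F‖ ≤ α / s := by
    rw [le_div_iff₀ hs0]
    have h2 : (‖F‖ * s) ^ 2 ≤ α ^ 2 := by
      have he : (‖F‖ * s) ^ 2 = ‖F‖ ^ 2 * s ^ 2 := by ring
      rw [he, hss, hpyth]
      nlinarith [hkey2, hpyth]
    have h4 := Real.sqrt_le_sqrt h2
    rwa [Real.sqrt_sq (by positivity), Real.sqrt_sq hα0.le] at h4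
  refine ⟨⟨?_, ?_⟩, ?_, ?_⟩
  · rw [hFnorm]; exact hFge1
  · rw [hFnorm]; exact hFle
  · exact ENNReal.toReal_nonneg
  · rw [hd2]; exact hgle
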